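/- Let m ≥ 93 be an integer. Then every positive integer n can be written as ∑_{i=1}^{5} P_m(x_i) + 6·∑_{j=1}^{⌈(m-3)/6⌉ - 1} P_m(y_j) with x_i, y_j ∈ ℤ, and the form ∑_{i=1}^{5} P_m(x_i) + 6·∑_{j=1}^{⌈(m-3)/6⌉ - 2} P_m(y_j) is not universal. Equivalently, ℓ_{m,6,5} = ⌈(m-3)/6⌉ + 4. -/

import Mathlib

/-- The `x`-th generalized `m`-gonal number `P_m(x) = ((m-2)x² - (m-4)x)/2`. -/
def polygonal (m : ℕ) (x : ℤ) : ℤ := (((m : ℤ) - 2) * x ^ 2 - ((m : ℤ) - 4) * x) / 2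

namespace EllAux

def gg (x : ℤ) : ℤ := x * (x - 1) / 2

lemma two_gg (x : ℤ) : 2 * gg x = x * (x - 1) := by
  have h : Even (x * (x - 1)) := by
    have := Int.even_mul_succ_self (x - 1)
    have h2 : (x - 1) * (x - 1 + 1) = x * (x - 1) := by ring
    rwa [h2] at this
  obtain ⟨c, hc⟩ := h
  show 2 * (x * (x - 1) / 2) = x * (x - 1)
  rw [hc]; omega

lemma poly_eq (m : ℕ) (x : ℤ) : polygonal m x = ((m : ℤ) - 2) * gg x + x := by
  have key : ((m : ℤ) - 2) * x ^ 2 - ((m : ℤ) - 4) * x = 2 * (((m : ℤ) - 2) * gg x + x) := by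
    linear_combination (2 - (m : ℤ)) * two_gg x
  unfold polygonal
  rw [key]
  generalize (((m : ℤ) - 2) * gg x + x) = c
  omega

def bsum (L : List ℤ) : ℤ := (L.map gg).sum
def fsum (L : List ℤ) : ℤ := L.sum

@[simp] lemma bsum_nil : bsum [] = 0 := rfl
@[simp] lemma fsum_nil : fsum [] = 0 := rfl
@[simp] lemma bsum_cons (a : ℤ) (L : List ℤ) : bsum (a :: L) = gg a + bsum L := by
  simp [bsum]
@[simp] lemma fsum_cons (a : ℤ) (L : List ℤ) : fsum (a :: L) = a + fsum L := by
  simp [fsum]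
@[simp] lemma bsum_append (L M : List ℤ) : bsum (L ++ M) = bsum L + bsum M := by
  simp [bsum]
@[simp] lemma fsum_append (L M : List ℤ) : fsum (L ++ M) = fsum L + fsum M := by
  simp [fsum]
@[simp] lemma bsum_replicate (k : ℕ) (v : ℤ) : bsum (List.replicate k v) = k * gg v := by
  simp [bsum, List.map_replicate, List.sum_replicate, nsmul_eq_mul]
@[simp] lemma fsum_replicate (k : ℕ) (v : ℤ) : fsum (List.replicate k v) = k * v := by
  simp [fsum, List.sum_replicate, nsmul_eq_mul]

lemma psum_eq (m : ℕ) (L : List ℤ) :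
    (L.map (polygonal m)).sum = ((m : ℤ) - 2) * bsum L + fsum L := by
  induction L with
  | nil => simp
  | cons a t ih =>
    simp only [List.map_cons, List.sum_cons, bsum_cons, fsum_cons]
    rw [poly_eq, ih]; ring

lemma poly_zero (m : ℕ) : polygonal m 0 = 0 := by simp [polygonal]

lemma fin_sum_of_list (m : ℕ) : ∀ (N : ℕ) (L : List ℤ), L.length ≤ N →
    ∃ f : Fin N → ℤ, ∑ i, polygonal m (f i) = (L.map (polygonal m)).sum := by
  intro N
  induction N with
  | zero =>
    intro L hL
    have : L = [] := List.length_eq_zero_iff.mp (Nat.le_zero.mp hL)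
    subst this
    exact ⟨fun i => 0, by simp⟩
  | succ N ih =>
    intro L hL
    match L with
    | [] =>
      refine ⟨fun _ => 0, ?_⟩
      simp [poly_zero]
    | a :: t =>
      obtain ⟨f, hf⟩ := ih t (by simpa using hL)
      refine ⟨Fin.cons a f, ?_⟩
      rw [Fin.sum_univ_succ]
      simp only [Fin.cons_zero, Fin.cons_succ]
      rw [hf]; simp

lemma build (m : ℕ) (N1 N2 : ℕ) (n : ℤ) (Lx Ly : List ℤ)
    (h1 : Lx.length ≤ N1) (h2 : Ly.length ≤ N2)
    (heq : ((m:ℤ) - 2) * (bsum Lx + 6 * bsum Ly) + (fsum Lx + 6 * fsum Ly) = n) :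
    ∃ x : Fin N1 → ℤ, ∃ y : Fin N2 → ℤ,
      ∑ i, polygonal m (x i) + 6 * ∑ j, polygonal m (y j) = n := by
  obtain ⟨f, hf⟩ := fin_sum_of_list m N1 Lx h1
  obtain ⟨g, hg⟩ := fin_sum_of_list m N2 Ly h2
  refine ⟨f, g, ?_⟩
  rw [hf, hg, psum_eq, psum_eq]
  linear_combination heq

end EllAux

namespace EllAux

lemma gg_vals : gg 0 = 0 ∧ gg 1 = 0 ∧ gg (-1) = 1 ∧ gg 2 = 1 ∧ gg (-2) = 3 ∧
    gg 3 = 3 ∧ gg (-3) = 6 ∧ gg 4 = 6 := by decide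

lemma gg_lb_pos (x : ℤ) (hx : 2 ≤ x) : 1 ≤ gg x := by
  nlinarith [two_gg x]

lemma gg_lb_neg (x : ℤ) (hx : x ≤ -1) : 1 ≤ gg x ∧ -x ≤ gg x := by
  constructor <;> nlinarith [two_gg x]

lemma poly_dichotomy (m : ℕ) (hm : 93 ≤ m) (x : ℤ) :
    polygonal m x = 0 ∨ polygonal m x = 1 ∨ (m : ℤ) - 3 ≤ polygonal m x := by
  have hm' : (93 : ℤ) ≤ (m : ℤ) := by exact_mod_cast hm
  rw [poly_eq]
  rcases le_or_gt x (-1) with hx | hx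
  · right; right
    obtain ⟨h1, h2⟩ := gg_lb_neg x hx
    have hd : (0:ℤ) ≤ (m:ℤ) - 2 := by linarith
    have := mul_le_mul_of_nonneg_left h2 hd
    nlinarith
  · rcases le_or_gt 2 x with hx2 | hx2
    · right; right
      have h1 := gg_lb_pos x hx2
      have hd : (0:ℤ) ≤ (m:ℤ) - 2 := by linarith
      have := mul_le_mul_of_nonneg_left h1 hd
      nlinarith
    · interval_cases x
      · left; simp [gg_vals.1]
      · right; left; simp [gg_vals.2.1]

lemma poly_nonneg (m : ℕ) (hm : 93 ≤ m) (x : ℤ) : 0 ≤ polygonal m x := by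
  have hm' : (93 : ℤ) ≤ (m : ℤ) := by exact_mod_cast hm
  rcases poly_dichotomy m hm x with h | h | h <;> omega

end EllAux
namespace EllAux

lemma realize_dec : ∀ T : Fin 20, ∀ a : Fin 6, ∀ g : Fin 3, 1 ≤ T.val → T.val ≤ 3*a.val + 2*g.val →
    ∃ i : Fin 6, ∃ j : Fin 3, i.val ≤ a.val ∧ j.val ≤ g.val ∧ T.val ≤ 5*i.val + 3*j.val ∧
      5*i.val + 3*j.val ≤ T.val + 4 := by decide

lemma gg_pair (w : ℤ) : gg w + gg (-w) = w ^ 2 := by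
  have hsum : 2 * (gg w + gg (-w)) = 2 * w ^ 2 := by
    linear_combination two_gg w + two_gg (-w)
  linarith

/-- Realize a y-list with prescribed block sum `G` and linear sum `Z`. -/
lemma realize (K G Z : ℕ) (hK : 14 ≤ K) (hZ2 : Z ≤ K + 2)
    (h0 : G = 0 → Z ≤ K) (h1 : G = 1 → Z ≤ K + 1) :
    ∃ L : List ℤ, L.length ≤ K ∧ bsum L = G ∧ fsum L = Z := by
  obtain ⟨hg0, hg1, hgm1, hg2, hgm2, hg3, hgm3, hg4⟩ := gg_vals
  rcases Nat.eq_zero_or_pos G with hG | hGpos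
  · subst hG
    exact ⟨List.replicate Z 1, by simpa using h0 rfl, by simp [hg1], by simp⟩
  rcases eq_or_lt_of_le (show 1 ≤ G from hGpos) with hG1 | hG2
  · -- G = 1
    have hZ1 := h1 hG1.symm
    rcases le_or_gt 2 Z with hZ | hZ
    · refine ⟨2 :: List.replicate (Z - 2) 1, ?_, ?_, ?_⟩
      · simp only [List.length_cons, List.length_replicate]; omega
      · simp only [bsum_cons, bsum_replicate, hg2, hg1, ← hG1]; ring
      · simp only [fsum_cons, fsum_replicate, mul_one]; push_cast; omega
    · refine ⟨(-1) :: List.replicate (Z + 1) 1, ?_, ?_, ?_⟩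
      · simp only [List.length_cons, List.length_replicate]; omega
      · simp only [bsum_cons, bsum_replicate, hgm1, hg1, ← hG1]; ring
      · simp only [fsum_cons, fsum_replicate, mul_one]; push_cast; omega
  rcases le_or_gt G 17 with hG17 | hG18
  · -- 2 ≤ G ≤ 17
    set α := G / 3 with hα
    set γ := G % 3 with hγ
    rcases le_or_gt (3 * α + 2 * γ) Z with hC | hC
    · refine ⟨List.replicate α 3 ++ List.replicate γ 2 ++ List.replicate (Z - (3*α + 2*γ)) 1,
        ?_, ?_, ?_⟩
      · simp only [List.length_append, List.length_replicate]; omega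
      · simp only [bsum_append, bsum_replicate, hg3, hg2, hg1]; push_cast; omega
      · simp only [fsum_append, fsum_replicate, mul_one, mul_comm]; push_cast; omega
    · obtain ⟨i, j, hia, hjg, hT1, hT2⟩ :=
        realize_dec ⟨3 * α + 2 * γ - Z, by omega⟩ ⟨α, by omega⟩ ⟨γ, by omega⟩ (by simp; omega)
          (by simp)
      simp only at hia hjg hT1 hT2
      refine ⟨List.replicate (α - i.val) 3 ++ List.replicate i.val (-2) ++
          List.replicate (γ - j.val) 2 ++ List.replicate j.val (-1) ++
          List.replicate (5 * i.val + 3 * j.val - (3 * α + 2 * γ - Z)) 1, ?_, ?_, ?_⟩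
      · simp only [List.length_append, List.length_replicate]; omega
      · simp only [bsum_append, bsum_replicate, hg3, hgm2, hg2, hgm1, hg1]; push_cast; omega
      · simp only [fsum_append, fsum_replicate, mul_one]; push_cast; omega
  · -- G ≥ 18
    set j0 := K - 8 with hj0
    obtain ⟨span, hslen, gs, hsbs, hsfs, hs17⟩ :
        ∃ span : List ℤ, span.length ≤ j0 ∧
          ∃ gs : ℕ, bsum span = (gs:ℤ) ∧ fsum span = (Z:ℤ) ∧ gs ≤ 17 := by
      rcases le_or_gt Z j0 with hZ | hZ
      · refine ⟨List.replicate Z 1, by simp only [List.length_replicate]; omega, 0, ?_, ?_, by omega⟩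
        · simp [hg1]
        · simp
      rcases le_or_gt Z (2 * j0) with hZ' | hZ'
      · refine ⟨List.replicate (Z - j0) 2 ++ List.replicate (2 * j0 - Z) 1,
          by simp only [List.length_append, List.length_replicate]; omega, Z - j0, ?_, ?_, by omega⟩
        · simp only [bsum_append, bsum_replicate, hg2, hg1]; push_cast; omega
        · simp only [fsum_append, fsum_replicate, mul_one]; push_cast; omega
      · refine ⟨List.replicate (Z - 2 * j0) 3 ++ List.replicate (j0 - (Z - 2 * j0)) 2,
          by simp only [List.length_append, List.length_replicate]; omega,
          3 * (Z - 2*j0) + (j0 - (Z - 2*j0)), ?_, ?_, by omega⟩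
        · simp only [bsum_append, bsum_replicate, hg3, hg2]; push_cast; omega
        · simp only [fsum_append, fsum_replicate]; push_cast; omega
    obtain ⟨a, b, c, e, habce⟩ := Nat.sum_four_squares (G - gs)
    have hgsG : gs ≤ G := by omega
    have habce' : (a:ℤ)^2 + (b:ℤ)^2 + (c:ℤ)^2 + (e:ℤ)^2 = (G:ℤ) - (gs:ℤ) := by
      zify [hgsG] at habce; exact_mod_cast habce
    refine ⟨[(a:ℤ), -(a:ℤ), (b:ℤ), -(b:ℤ), (c:ℤ), -(c:ℤ), (e:ℤ), -(e:ℤ)] ++ span, ?_, ?_, ?_⟩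
    · simp only [List.length_append, List.length_cons, List.length_nil]; omega
    · have h8 : bsum [(a:ℤ), -(a:ℤ), (b:ℤ), -(b:ℤ), (c:ℤ), -(c:ℤ), (e:ℤ), -(e:ℤ)]
          = (a:ℤ)^2 + (b:ℤ)^2 + (c:ℤ)^2 + (e:ℤ)^2 := by
        simp only [bsum, List.map_cons, List.map_nil, List.sum_cons, List.sum_nil]
        linear_combination gg_pair (a:ℤ) + gg_pair (b:ℤ) + gg_pair (c:ℤ) + gg_pair (e:ℤ)
      rw [bsum_append, h8, hsbs]
      rw [habce']; ring
    · have h8f : fsum [(a:ℤ), -(a:ℤ), (b:ℤ), -(b:ℤ), (c:ℤ), -(c:ℤ), (e:ℤ), -(e:ℤ)] = 0 := by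
        simp only [fsum, List.sum_cons, List.sum_nil]; ring
      rw [fsum_append, h8f, hsfs]; ring

end EllAux
namespace EllAux

/-- table for 1 ≤ A ≤ 7: x-list with block sum A and linear sum r (0 ≤ r ≤ 5). -/
def f2b : ℕ → ℕ → List ℤ
  | 1, 0 => [-1,1]      | 1, 1 => [-1,1,1]     | 1, 2 => [2]          | 1, 3 => [2,1]
  | 1, 4 => [2,1,1]     | 1, 5 => [2,1,1,1]
  | 2, 0 => [-1,-1,1,1] | 2, 1 => [-1,-1,1,1,1]| 2, 2 => [-1,2,1]     | 2, 3 => [-1,2,1,1]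
  | 2, 4 => [2,2]       | 2, 5 => [2,2,1]
  | 3, 0 => [-2,1,1]    | 3, 1 => [-2,1,1,1]   | 3, 2 => [-2,1,1,1,1] | 3, 3 => [3]
  | 3, 4 => [3,1]       | 3, 5 => [3,1,1]
  | 4, 0 => [-2,2]      | 4, 1 => [-2,2,1]     | 4, 2 => [-2,2,1,1]   | 4, 3 => [-2,2,1,1,1]
  | 4, 4 => [3,-1,1,1]  | 4, 5 => [3,2]
  | 5, 0 => [-2,-1,2,1] | 5, 1 => [-2,-1,2,1,1]| 5, 2 => [-2,2,2]     | 5, 3 => [-2,2,2,1]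
  | 5, 4 => [3,-1,2]    | 5, 5 => [3,-1,2,1]
  | 6, 0 => [-3,1,1,1]  | 6, 1 => [-2,3]       | 6, 2 => [-2,3,1]     | 6, 3 => [-2,3,1,1]
  | 6, 4 => [4]         | 6, 5 => [4,1]
  | 7, 0 => [3,-2,-1]   | 7, 1 => [3,-2,-1,1]  | 7, 2 => [3,-2,-1,1,1]| 7, 3 => [4,-1]
  | 7, 4 => [4,-1,1]    | 7, 5 => [4,-1,1,1]
  | _, _ => []

lemma f2b_spec : ∀ a : Fin 8, ∀ r : Fin 6, 1 ≤ a.val →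
    bsum (f2b a.val r.val) = (a.val : ℤ) ∧ fsum (f2b a.val r.val) = (r.val : ℤ) ∧
      (f2b a.val r.val).length ≤ 5 := by decide

/-- core pattern for 2a: blocks b, linear sum 0, length ≤ 4. -/
def core5 : ℕ → List ℤ
  | 0 => [] | 1 => [1,-1] | 2 => [1,-1,1,-1] | 3 => [-2,1,1] | 4 => [-2,2] | 5 => [-2,-1,2,1]
  | _ => []

lemma core5_spec : ∀ b : Fin 6,
    bsum (core5 b.val) = (b.val : ℤ) ∧ fsum (core5 b.val) = 0 ∧ (core5 b.val).length ≤ 4 := by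
  decide

/-- table for the top-strip case: x-list with block sum ≡ r (mod 6), linear sum -1 + 6e. -/
def f2c : ℕ → List ℤ
  | 0 => [1,1,1,1,1] | 1 => [-1] | 2 => [-1,-1,1] | 3 => [-2,1] | 4 => [-2,-1,1,1]
  | 5 => [-2,-1,2] | _ => []

def e2c : ℕ → ℕ := fun r => if r = 0 then 1 else 0
def b2c : ℕ → ℕ := fun r => if r = 0 then 0 else r

lemma f2c_spec : ∀ r : Fin 6,
    bsum (f2c r.val) = (b2c r.val : ℤ) ∧ fsum (f2c r.val) = -1 + 6 * (e2c r.val : ℤ) ∧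
      (f2c r.val).length ≤ 5 := by decide

lemma f2b_spec' (a r : ℕ) (ha : a < 8) (hr : r < 6) (h1 : 1 ≤ a) :
    bsum (f2b a r) = (a : ℤ) ∧ fsum (f2b a r) = (r : ℤ) ∧ (f2b a r).length ≤ 5 :=
  f2b_spec ⟨a, ha⟩ ⟨r, hr⟩ h1

lemma core5_spec' (b : ℕ) (hb : b < 6) :
    bsum (core5 b) = (b : ℤ) ∧ fsum (core5 b) = 0 ∧ (core5 b).length ≤ 4 :=
  core5_spec ⟨b, hb⟩

lemma f2c_spec' (r : ℕ) (hr : r < 6) :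
    bsum (f2c r) = (b2c r : ℤ) ∧ fsum (f2c r) = -1 + 6 * (e2c r : ℤ) ∧ (f2c r).length ≤ 5 :=
  f2c_spec ⟨r, hr⟩

lemma close (m n A : ℕ) (J BX BY FX FY RZ : ℤ)
    (hnZ : (n:ℤ) = ((m:ℤ) - 2) * (A:ℤ) + RZ)
    (hB : BX + 6*BY = (A:ℤ) + J)
    (hF : FX + 6*FY = RZ - J * ((m:ℤ) - 2)) :
    ((m:ℤ) - 2) * (BX + 6*BY) + (FX + 6*FY) = (n:ℤ) := by
  rw [hB, hF, hnZ]; ring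

end EllAux
namespace EllAux

lemma case2a (m K n A R q0 t0 gs θ : ℕ) (ts : ℤ) (hm : 93 ≤ m) (hK : 14 ≤ K)
    (hgg : gg ts = (gs:ℤ)) (hts : ts = (t0:ℤ) - 6*(θ:ℤ))
    (hA8 : 8 ≤ A) (hgs3 : gs ≤ 3)
    (hnZ : ((m:ℤ) - 2) * (A:ℤ) + (R:ℤ) = (n:ℤ))
    (hRq : R = 6 * q0 + t0)
    (hcap0 : A = gs + (A - gs) % 6 → q0 + θ ≤ K)
    (hcap1 : A = gs + (A - gs) % 6 + 6 → q0 + θ ≤ K + 1)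
    (hcap2 : q0 + θ ≤ K + 2) :
    ∃ x : Fin 5 → ℤ, ∃ y : Fin K → ℤ,
      ∑ i, polygonal m (x i) + 6 * ∑ j, polygonal m (y j) = (n:ℤ) := by
  set β := (A - gs) % 6 with hβ
  set G := (A - gs - β) / 6 with hG
  set Z := q0 + θ with hZ
  have hGdef : gs + β + 6 * G = A := by omega
  obtain ⟨Ly, hlenY, hbY, hfY⟩ := realize K G Z hK hcap2
    (by intro h; exact hcap0 (by omega)) (by intro h; exact hcap1 (by omega))
  obtain ⟨hcb, hcf, hclen⟩ := core5_spec' β (by omega)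
  apply build m 5 K (n:ℤ) (ts :: core5 β) Ly
    (by simp only [List.length_cons]; omega) hlenY
  simp only [bsum_cons, fsum_cons, hcb, hcf, hgg, hbY, hfY]
  have hB : (gs:ℤ) + (β:ℤ) + 6*(G:ℤ) = (A:ℤ) := by exact_mod_cast congrArg (Nat.cast (R := ℤ)) hGdef
  have hF : ts + 6*(Z:ℤ) = (R:ℤ) := by rw [hts]; push_cast; omega
  linear_combination hnZ + ((m:ℤ) - 2) * hB + hF

end EllAux

open EllAux

theorem ell_m_six_five (m : ℕ) (hm : 93 ≤ m) :
    (∀ n : ℕ, 0 < n →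
        ∃ (x : Fin 5 → ℤ) (y : Fin ((m - 3 + 5) / 6 - 1) → ℤ),
          ∑ i, polygonal m (x i) + 6 * ∑ j, polygonal m (y j) = (n : ℤ)) ∧
      ¬ ∀ n : ℕ, 0 < n →
          ∃ (x : Fin 5 → ℤ) (y : Fin ((m - 3 + 5) / 6 - 2) → ℤ),
            ∑ i, polygonal m (x i) + 6 * ∑ j, polygonal m (y j) = (n : ℤ) := by
  obtain ⟨hg0, hg1, hgm1, hg2, hgm2, hg3, hgm3, hg4⟩ := gg_vals
  constructor
  · intro n hn
    set K := (m - 3 + 5) / 6 - 1 with hKdef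
    have hKf : 14 ≤ K ∧ m - 9 ≤ 6 * K ∧ 6 * K ≤ m - 4 := by omega
    rcases le_or_gt n (6 * K + 5) with hz | hz
    · -- Zone A : small n
      apply build m 5 K (n:ℤ) (List.replicate (n % 6) 1) (List.replicate (n / 6) 1)
        (by simp only [List.length_replicate]; omega)
        (by simp only [List.length_replicate]; omega)
      simp only [bsum_replicate, fsum_replicate, hg1, mul_zero, mul_one]
      push_cast
      omega
    · -- n ≥ 6K + 6
      obtain ⟨A, R, hAR, hRlt⟩ : ∃ A R, n = (m - 2) * A + R ∧ R < m - 2 :=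
        ⟨n / (m - 2), n % (m - 2), (Nat.div_add_mod n (m - 2)).symm, Nat.mod_lt _ (by omega)⟩
      have hnZ : ((m:ℤ) - 2) * (A:ℤ) + (R:ℤ) = (n:ℤ) := by
        have h2 : 2 ≤ m := by omega
        zify [h2] at hAR
        linarith
      obtain ⟨q0, t0, ht6, hR6⟩ : ∃ q t, t < 6 ∧ R = 6 * q + t :=
        ⟨R / 6, R % 6, by omega, by omega⟩
      have hq0 : q0 ≤ K + 1 := by omega
      by_cases hsm : A ≤ 7 ∨ (A ≤ 19 ∧ q0 = K + 1)
      · by_cases hq : q0 ≤ K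
        · -- case 2b : 1 ≤ A ≤ 7
          have hA1 : 1 ≤ A := by
            rcases Nat.eq_zero_or_pos A with h0 | h1
            · rw [h0, Nat.mul_zero, Nat.zero_add] at hAR; omega
            · exact h1
          have hA7 : A ≤ 7 := by omega
          obtain ⟨hb, hf, hlen⟩ := f2b_spec' A t0 (by omega) (by omega) hA1
          apply build m 5 K (n:ℤ) (f2b A t0) (List.replicate q0 1) hlen
            (by simp only [List.length_replicate]; omega)
          simp only [hb, hf, bsum_replicate, fsum_replicate, hg1, mul_zero, mul_one]
          have hF : (t0:ℤ) + 6 * (q0:ℤ) = (R:ℤ) := by omega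
          linear_combination hnZ + hF
        · -- case 2c : q0 = K + 1, top strip
          have hq1 : q0 = K + 1 := by omega
          have ht0 : t0 = 0 ∧ R = 6 * K + 6 ∧ m - 2 = 6 * K + 7 := by omega
          have hA19 : A ≤ 19 := by omega
          obtain ⟨hcb, hcf, hclen⟩ := f2c_spec' ((A + 1) % 6) (by omega)
          set r := (A + 1) % 6 with hr
          have hcost : (b2c r + 6 * e2c r) % 6 = r ∧ 1 ≤ b2c r + 6 * e2c r ∧
              b2c r + 6 * e2c r ≤ 6 ∧ e2c r ≤ 1 := by
            unfold b2c e2c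
            split <;> omega
          set H := (A + 1 - b2c r - 6 * e2c r) / 6 with hH
          have hHex : b2c r + 6 * e2c r + 6 * H = A + 1 := by omega
          have hH3 : H ≤ 3 := by omega
          apply build m 5 K (n:ℤ) (f2c r)
            (List.replicate (e2c r) (-1) ++ List.replicate H 1 ++ List.replicate H (-1)) hclen
            (by simp only [List.length_append, List.length_replicate]; omega)
          simp only [hcb, hcf, bsum_append, fsum_append, bsum_replicate, fsum_replicate,
            hg1, hgm1, mul_zero, mul_one]
          have hB : (b2c r : ℤ) + 6 * ((e2c r : ℤ) * 1 + ((H:ℤ) * 0 + (H:ℤ) * 1)) = (A:ℤ) + 1 := by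
            push_cast
            omega
          have hF : (-1 + 6 * (e2c r : ℤ)) + 6 * ((e2c r:ℤ) * (-1) + ((H:ℤ) * 1 + (H:ℤ) * (-1)))
              = (R:ℤ) - ((m:ℤ) - 2) := by
            push_cast
            omega
          linear_combination hnZ + ((m:ℤ) - 2) * hB + hF
      · push_neg at hsm
        obtain ⟨hA8, hsm2⟩ := hsm
        by_cases hbes : A = 8 ∧ t0 = 4 ∧ q0 = K
        · -- bespoke leaf
          obtain ⟨hA8', ht04, hq0K⟩ := hbes
          have hbx : bsum [4,-1,-1,1,1] = 8 ∧ fsum [4,-1,-1,1,1] = 4 := by decide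
          apply build m 5 K (n:ℤ) [4,-1,-1,1,1] (List.replicate K 1) (by simp)
            (by simp only [List.length_replicate]; omega)
          simp only [hbx.1, hbx.2, bsum_replicate, fsum_replicate, hg1, mul_zero, mul_one]
          have hB : (8:ℤ) + 6 * ((K:ℤ) * 0) = (A:ℤ) := by push_cast; omega
          have hF : (4:ℤ) + 6 * (K:ℤ) = (R:ℤ) := by omega
          linear_combination hnZ + ((m:ℤ) - 2) * hB + hF
        · -- case 2a
          have hq0K : q0 = K + 1 → (t0 = 0 ∧ 20 ≤ A) := by
            intro h
            exact ⟨by omega, by omega⟩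
          interval_cases t0
          · exact case2a m K n A R q0 0 0 0 0 hm (by omega) hg0 (by norm_num) hA8 (by omega)
              hnZ (by omega) (by omega) (by omega) (by omega)
          · exact case2a m K n A R q0 1 0 0 1 hm (by omega) hg1 (by norm_num) hA8 (by omega)
              hnZ (by omega) (by omega) (by omega) (by omega)
          · exact case2a m K n A R q0 2 1 0 2 hm (by omega) hg2 (by norm_num) hA8 (by omega)
              hnZ (by omega) (by omega) (by omega) (by omega)
          · exact case2a m K n A R q0 3 3 0 3 hm (by omega) hg3 (by norm_num) hA8 (by omega)
              hnZ (by omega) (by omega) (by omega) (by omega)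
          · exact case2a m K n A R q0 4 3 1 (-2) hm (by omega) hgm2 (by norm_num) hA8 (by omega)
              hnZ (by omega) (by omega) (by omega) (by omega)
          · exact case2a m K n A R q0 5 1 1 (-1) hm (by omega) hgm1 (by norm_num) hA8 (by omega)
              hnZ (by omega) (by omega) (by omega) (by omega)
  · -- non-universality
    intro hall
    set K2 := (m - 3 + 5) / 6 - 2 with hK2
    obtain ⟨x, y, hxy⟩ := hall (m - 4) (by omega)
    have hxnn : ∀ i, 0 ≤ polygonal m (x i) := fun i => poly_nonneg m hm _
    have hynn : ∀ j, 0 ≤ polygonal m (y j) := fun j => poly_nonneg m hm _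
    have hsx : (0:ℤ) ≤ ∑ i, polygonal m (x i) := Finset.sum_nonneg fun i _ => hxnn i
    have hsy : (0:ℤ) ≤ ∑ j, polygonal m (y j) := Finset.sum_nonneg fun j _ => hynn j
    have hcast : ((m - 4 : ℕ) : ℤ) = (m:ℤ) - 4 := by omega
    rw [hcast] at hxy
    have hx1 : ∀ i, polygonal m (x i) ≤ 1 := by
      intro i
      have h1 : polygonal m (x i) ≤ ∑ i, polygonal m (x i) :=
        Finset.single_le_sum (fun j _ => hxnn j) (Finset.mem_univ i)
      rcases poly_dichotomy m hm (x i) with h | h | h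
      · omega
      · omega
      · exfalso
        have hm' : (93:ℤ) ≤ (m:ℤ) := by exact_mod_cast hm
        linarith
    have hy1 : ∀ j, polygonal m (y j) ≤ 1 := by
      intro j
      have h1 : polygonal m (y j) ≤ ∑ j, polygonal m (y j) :=
        Finset.single_le_sum (fun i _ => hynn i) (Finset.mem_univ j)
      rcases poly_dichotomy m hm (y j) with h | h | h
      · omega
      · omega
      · exfalso
        have hm' : (93:ℤ) ≤ (m:ℤ) := by exact_mod_cast hm
        linarith
    have hbx : ∑ i, polygonal m (x i) ≤ 5 := by
      calc ∑ i, polygonal m (x i) ≤ ∑ _i : Fin 5, (1:ℤ) :=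
            Finset.sum_le_sum fun i _ => hx1 i
        _ = 5 := by simp
    have hby : ∑ j, polygonal m (y j) ≤ (K2 : ℤ) := by
      calc ∑ j, polygonal m (y j) ≤ ∑ _j : Fin K2, (1:ℤ) :=
            Finset.sum_le_sum fun j _ => hy1 j
        _ = (K2 : ℤ) := by simp
    have hK2b : 6 * K2 ≤ m - 10 := by omega
    have hm' : (93:ℤ) ≤ (m:ℤ) := by exact_mod_cast hm
    have hK2bZ : 6 * (K2:ℤ) ≤ (m:ℤ) - 10 := by omega
    linarith
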